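/- arXiv:2110.11253 — 2 statements merged into one kernel-verified Lean document; each statement's English description precedes it below -/
import Mathlib

section
/- Let A ∈ ℝ^{n×n}, B ∈ ℝ^{n×w}, C ∈ ℝ^{p×n}, let η > 0 and ϑ > 0, and suppose there exist symmetric matrices P ∈ ℝ^{n×n} and Z ∈ ℝ^{p×p} such that the block matrices [[P, AP, B],[PAᵀ, P, 0],[Bᵀ, 0, I_w]] − ϑI and [[Z, CP],[PCᵀ, P]] − ϑI are positive semidefinite and Trace(Z) ≤ η − ϑ. Then every complex eigenvalue of A has modulus strictly less than 1, and the series Σ_{k=0}^{∞} Trace((C A^k B)(C A^k B)ᵀ) converges with Σ_{k=0}^{∞} Trace((C A^k B)(C A^k B)ᵀ) < η. -/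
open Matrix ComplexOrder

private lemma real_ct {m k : Type*} (M : Matrix m k ℝ) : Mᴴ = Mᵀ := by
  ext i j; simp [Matrix.conjTranspose_apply]

private lemma psd_mul_transpose_self {m k : ℕ} (M : Matrix (Fin m) (Fin k) ℝ) :
    (M * Mᵀ).PosSemidef := by
  rw [← real_ct]; exact Matrix.posSemidef_self_mul_conjTranspose M

private lemma psd_trace_nonneg {m : ℕ} {M : Matrix (Fin m) (Fin m) ℝ} (h : M.PosSemidef) :
    0 ≤ M.trace := by
  rw [Matrix.trace]
  refine Finset.sum_nonneg fun i _ => ?_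
  simpa [Matrix.diag, Matrix.mulVec_single, dotProduct, Pi.single_apply,
    Finset.sum_ite_eq] using h.dotProduct_mulVec_nonneg (Pi.single i 1)

private lemma psd_smul_one {m : ℕ} {c : ℝ} (hc : 0 ≤ c) :
    (c • (1 : Matrix (Fin m) (Fin m) ℝ)).PosSemidef := by
  refine Matrix.PosSemidef.of_dotProduct_mulVec_nonneg ?_ (fun x => ?_)
  · rw [Matrix.IsHermitian, real_ct]
    simp
  · simp only [star_trivial, Matrix.smul_mulVec, Matrix.one_mulVec,
      dotProduct_smul, smul_eq_mul]
    exact mul_nonneg hc (dotProduct_star_self_nonneg x)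

private lemma psd_map {m : ℕ} {M : Matrix (Fin m) (Fin m) ℝ} (h : M.PosSemidef) :
    (M.map Complex.ofReal).PosSemidef := by
  obtain ⟨N, rfl⟩ : ∃ N : Matrix (Fin m) (Fin m) ℝ, M = Nᴴ * N := by
    open scoped MatrixOrder in
    exact ⟨CFC.sqrt M, by
      rw [(CFC.sqrt_nonneg M).posSemidef.1.eq, CFC.sqrt_mul_sqrt_self M h.nonneg]⟩
  have e : (Nᴴ * N).map Complex.ofReal
      = (N.map Complex.ofReal)ᴴ * (N.map Complex.ofReal) := by
    ext i j
    simp [Matrix.mul_apply, Matrix.map_apply, Matrix.conjTranspose_apply, Complex.conj_ofReal]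
  rw [e]
  exact Matrix.posSemidef_conjTranspose_mul_self _


private lemma h2_norm_partial_bound
    (n w p : ℕ)
    (A : Matrix (Fin n) (Fin n) ℝ) (B : Matrix (Fin n) (Fin w) ℝ)
    (C : Matrix (Fin p) (Fin n) ℝ)
    (η ϑ : ℝ) (hϑ : 0 < ϑ)
    (P : Matrix (Fin n) (Fin n) ℝ) (Z : Matrix (Fin p) (Fin p) ℝ)
    (hP : P.IsSymm)
    (hK : (P - A * P * Aᵀ - B * Bᵀ - ϑ • 1).PosSemidef)
    (hZC : (Z - C * P * Cᵀ).PosSemidef)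
    (hPsd : P.PosSemidef)
    (hQ : (P - A * P * Aᵀ - B * Bᵀ).PosSemidef)
    (h3 : Z.trace ≤ η - ϑ) (N : ℕ) :
    ∑ k ∈ Finset.range N, ((C * A ^ k * B) * (C * A ^ k * B)ᵀ).trace ≤ η - ϑ := by
  have hgnn : ∀ M : Matrix (Fin p) (Fin n) ℝ, 0 ≤ (M * P * Mᵀ).trace := fun M => by
    have h := hPsd.mul_mul_conjTranspose_same M
    rw [real_ct] at h
    exact psd_trace_nonneg h
  have hstep : ∀ k : ℕ, ((C * A ^ k * B) * (C * A ^ k * B)ᵀ).trace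
      ≤ ((C * A ^ k) * P * (C * A ^ k)ᵀ).trace
        - ((C * A ^ (k + 1)) * P * (C * A ^ (k + 1))ᵀ).trace := by
    intro k
    have h := hQ.mul_mul_conjTranspose_same (C * A ^ k)
    rw [real_ct] at h
    have h' := psd_trace_nonneg h
    have e : (C * A ^ k) * (P - A * P * Aᵀ - B * Bᵀ) * (C * A ^ k)ᵀ
        = (C * A ^ k) * P * (C * A ^ k)ᵀ
          - (C * A ^ (k + 1)) * P * (C * A ^ (k + 1))ᵀ
          - (C * A ^ k * B) * (C * A ^ k * B)ᵀ := by
      simp only [pow_succ, Matrix.mul_sub, Matrix.sub_mul, Matrix.transpose_mul,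
        Matrix.mul_assoc]
    rw [e, Matrix.trace_sub, Matrix.trace_sub] at h'
    linarith
  have key : ∀ N : ℕ, ∑ k ∈ Finset.range N, ((C * A ^ k * B) * (C * A ^ k * B)ᵀ).trace
      ≤ ((C * A ^ 0) * P * (C * A ^ 0)ᵀ).trace - ((C * A ^ N) * P * (C * A ^ N)ᵀ).trace := by
    intro N
    induction N with
    | zero => simp
    | succ m ih =>
      rw [Finset.sum_range_succ]
      have := hstep m
      linarith
  have h0 : ((C * A ^ 0) * P * (C * A ^ 0)ᵀ).trace = (C * P * Cᵀ).trace := by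
    simp
  have hZtr : (C * P * Cᵀ).trace ≤ Z.trace := by
    have h := psd_trace_nonneg hZC
    rw [Matrix.trace_sub] at h
    linarith
  have k1 := key N
  rw [h0] at k1
  linarith [hgnn (C * A ^ N)]

/-- H₂-norm LMI characterization (sufficiency direction): feasibility of the two LMIs
together with the trace bound implies Schur stability of `A` and that the squared
H₂-norm `∑ₖ Trace((C Aᵏ B)(C Aᵏ B)ᵀ)` is finite and less than `η`. -/
theorem h2_norm_lmi
    (n w p : ℕ)
    (A : Matrix (Fin n) (Fin n) ℝ) (B : Matrix (Fin n) (Fin w) ℝ)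
    (C : Matrix (Fin p) (Fin n) ℝ)
    (η ϑ : ℝ) (hη : 0 < η) (hϑ : 0 < ϑ)
    (P : Matrix (Fin n) (Fin n) ℝ) (Z : Matrix (Fin p) (Fin p) ℝ)
    (hP : P.IsSymm) (hZ : Z.IsSymm)
    (h1 : (Matrix.fromBlocks
            (Matrix.fromBlocks P (A * P) (P * Aᵀ) P)
            (Matrix.fromRows B (0 : Matrix (Fin n) (Fin w) ℝ))
            (Matrix.fromCols Bᵀ (0 : Matrix (Fin w) (Fin n) ℝ))
            (1 : Matrix (Fin w) (Fin w) ℝ)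
          - ϑ • 1).PosSemidef)
    (h2 : (Matrix.fromBlocks Z (C * P) (P * Cᵀ) P - ϑ • 1).PosSemidef)
    (h3 : Z.trace ≤ η - ϑ) :
    (∀ z ∈ spectrum ℂ (A.map (Complex.ofReal)), ‖z‖ < 1) ∧
    Summable (fun k : ℕ => ((C * A ^ k * B) * (C * A ^ k * B)ᵀ).trace) ∧
    ∑' k : ℕ, ((C * A ^ k * B) * (C * A ^ k * B)ᵀ).trace < η := by
  -- the key LMI consequence: P - A P Aᵀ - B Bᵀ - ϑ I ⪰ 0
  have hK : (P - A * P * Aᵀ - B * Bᵀ - ϑ • 1).PosSemidef := by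
    refine Matrix.PosSemidef.of_dotProduct_mulVec_nonneg ?_ (fun x => ?_)
    · rw [Matrix.IsHermitian, real_ct]
      simp [Matrix.transpose_sub, Matrix.transpose_mul, Matrix.transpose_smul,
        Matrix.mul_assoc, hP.eq]
    · have h := h1.dotProduct_mulVec_nonneg (Sum.elim (Sum.elim x (-(Aᵀ *ᵥ x))) (-(Bᵀ *ᵥ x)))
      have ha : 0 ≤ (Aᵀ *ᵥ x) ⬝ᵥ (Aᵀ *ᵥ x) := dotProduct_star_self_nonneg _
      have hb : 0 ≤ (Bᵀ *ᵥ x) ⬝ᵥ (Bᵀ *ᵥ x) := dotProduct_star_self_nonneg _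
      simp only [star_trivial, Matrix.sub_mulVec, Matrix.fromBlocks_mulVec,
        Matrix.fromRows_mulVec, Matrix.fromCols_mulVec_sumElim,
        sumElim_dotProduct_sumElim, Matrix.smul_mulVec, Matrix.one_mulVec,
        Sum.elim_comp_inl, Sum.elim_comp_inr, Matrix.transpose_fromCols,
        Matrix.transpose_zero, Matrix.zero_mulVec, Matrix.mulVec_neg, dotProduct_neg,
        neg_dotProduct, dotProduct_sub, sub_dotProduct,
        dotProduct_add, add_dotProduct, dotProduct_smul, smul_eq_mul,
        ← Matrix.mulVec_mulVec, Matrix.dotProduct_mulVec, ← Matrix.mulVec_transpose,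
        Matrix.transpose_mul, Matrix.transpose_transpose, hP.eq, Matrix.mulVec_zero,
        zero_dotProduct, dotProduct_zero, Matrix.mulVec_add, neg_neg]
        at h ha hb ⊢
      nlinarith [h, ha, hb, mul_nonneg hϑ.le ha, mul_nonneg hϑ.le hb]
  -- Z - C P Cᵀ ⪰ 0
  have hZC : (Z - C * P * Cᵀ).PosSemidef := by
    refine Matrix.PosSemidef.of_dotProduct_mulVec_nonneg ?_ (fun y => ?_)
    · rw [Matrix.IsHermitian, real_ct]
      simp [Matrix.transpose_sub, Matrix.transpose_mul, Matrix.mul_assoc, hP.eq, hZ.eq]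
    · have h := h2.dotProduct_mulVec_nonneg (Sum.elim y (-(Cᵀ *ᵥ y)))
      have hc : 0 ≤ (Cᵀ *ᵥ y) ⬝ᵥ (Cᵀ *ᵥ y) := dotProduct_star_self_nonneg _
      have hy : 0 ≤ y ⬝ᵥ y := dotProduct_star_self_nonneg y
      simp only [star_trivial, Matrix.sub_mulVec, Matrix.fromBlocks_mulVec,
        sumElim_dotProduct_sumElim, Matrix.smul_mulVec, Matrix.one_mulVec,
        Sum.elim_comp_inl, Sum.elim_comp_inr, Matrix.mulVec_neg, dotProduct_neg,
        neg_dotProduct, dotProduct_sub, sub_dotProduct,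
        dotProduct_add, add_dotProduct, dotProduct_smul, smul_eq_mul,
        ← Matrix.mulVec_mulVec, Matrix.dotProduct_mulVec, ← Matrix.mulVec_transpose,
        Matrix.transpose_mul, Matrix.transpose_transpose, hP.eq, Matrix.mulVec_zero,
        zero_dotProduct, dotProduct_zero, Matrix.mulVec_add, neg_neg]
        at h hc hy ⊢
      nlinarith [h, hc, hy, mul_nonneg hϑ.le hc, mul_nonneg hϑ.le hy]
  -- P - ϑ I ⪰ 0
  have hPθ : (P - ϑ • 1).PosSemidef := by
    refine Matrix.PosSemidef.of_dotProduct_mulVec_nonneg ?_ (fun y => ?_)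
    · rw [Matrix.IsHermitian, real_ct]
      simp [Matrix.transpose_sub, hP.eq]
    · have h := h2.dotProduct_mulVec_nonneg (Sum.elim 0 y)
      simp only [star_trivial, Matrix.sub_mulVec, Matrix.fromBlocks_mulVec,
        sumElim_dotProduct_sumElim, Matrix.smul_mulVec, Matrix.one_mulVec,
        Sum.elim_comp_inl, Sum.elim_comp_inr, Matrix.mulVec_zero, zero_dotProduct,
        dotProduct_zero, dotProduct_add, add_dotProduct,
        dotProduct_smul, smul_eq_mul, dotProduct_sub, sub_dotProduct]
        at h ⊢
      simpa using h
  have hPsd : P.PosSemidef := by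
    have h := hPθ.add (psd_smul_one (m := n) hϑ.le)
    simpa using h
  have hBB : (B * Bᵀ).PosSemidef := psd_mul_transpose_self B
  -- P - A P Aᵀ - B Bᵀ ⪰ 0
  have hQ : (P - A * P * Aᵀ - B * Bᵀ).PosSemidef := by
    have h := hK.add (psd_smul_one (m := n) hϑ.le)
    simpa using h
  -- P - A P Aᵀ - ϑ I ⪰ 0
  have hKs : (P - A * P * Aᵀ - ϑ • 1).PosSemidef := by
    have h := hK.add hBB
    have e : P - A * P * Aᵀ - B * Bᵀ - ϑ • 1 + B * Bᵀ = P - A * P * Aᵀ - ϑ • 1 := by abel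
    rwa [e] at h
  refine ⟨?_, ?_, ?_⟩
  · -- Schur stability
    intro z hz
    set Ac := A.map Complex.ofReal with hAc
    set Pc := P.map Complex.ofReal with hPcd
    have h := spectrum.mem_iff.mp hz
    rw [Algebra.algebraMap_eq_smul_one] at h
    have hdet : ((z • 1 - Ac)ᵀ).det = 0 := by
      rw [Matrix.det_transpose]
      by_contra hne
      exact h ((Matrix.isUnit_iff_isUnit_det _).mpr (isUnit_iff_ne_zero.mpr hne))
    obtain ⟨v, hv0, hveq⟩ := (Matrix.exists_mulVec_eq_zero_iff).mpr hdet
    have hev : Acᵀ *ᵥ v = z • v := by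
      rw [Matrix.transpose_sub, Matrix.transpose_smul, Matrix.transpose_one,
        Matrix.sub_mulVec, Matrix.smul_mulVec, Matrix.one_mulVec, sub_eq_zero] at hveq
      exact hveq.symm
    have hAct : Acᵀᴴ = Ac := by
      ext i j
      simp [hAc, Matrix.conjTranspose_apply, Matrix.map_apply, Complex.conj_ofReal]
    have hsv : star v ᵥ* Ac = (starRingEnd ℂ) z • star v := by
      have h1 : star (Acᵀ *ᵥ v) = star v ᵥ* (Acᵀᴴ) := Matrix.star_mulVec _ _
      rw [hAct] at h1
      rw [← h1, hev, star_smul]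
      rfl
    have hKc := psd_map hKs
    have eKc : (P - A * P * Aᵀ - ϑ • 1).map Complex.ofReal
        = Pc - Ac * Pc * Acᵀ - (ϑ : ℂ) • 1 := by
      ext i j
      simp only [Matrix.map_apply, Matrix.sub_apply, Matrix.smul_apply, Matrix.one_apply,
        Matrix.mul_apply, Matrix.transpose_apply, hAc, hPcd, smul_eq_mul, mul_ite, mul_one,
        mul_zero]
      push_cast
      split_ifs <;> simp
    rw [eKc] at hKc
    have hq := hKc.dotProduct_mulVec_nonneg v
    have e1 : (Ac * Pc * Acᵀ) *ᵥ v = z • (Ac *ᵥ (Pc *ᵥ v)) := by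
      rw [← Matrix.mulVec_mulVec, ← Matrix.mulVec_mulVec, hev, Matrix.mulVec_smul,
        Matrix.mulVec_smul]
    have e2 : star v ⬝ᵥ (Ac *ᵥ (Pc *ᵥ v)) = (starRingEnd ℂ) z * (star v ⬝ᵥ (Pc *ᵥ v)) := by
      rw [Matrix.dotProduct_mulVec, hsv, smul_dotProduct, smul_eq_mul]
    rw [Matrix.sub_mulVec, Matrix.sub_mulVec, dotProduct_sub, dotProduct_sub,
      e1, dotProduct_smul, e2, Matrix.smul_mulVec, Matrix.one_mulVec,
      dotProduct_smul] at hq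
    have hzz : z • ((starRingEnd ℂ) z * (star v ⬝ᵥ (Pc *ᵥ v)))
        = ((Complex.normSq z : ℝ) : ℂ) * (star v ⬝ᵥ (Pc *ᵥ v)) := by
      rw [smul_eq_mul, ← mul_assoc, Complex.mul_conj]
    rw [hzz] at hq
    have hs0 : 0 ≤ star v ⬝ᵥ (Pc *ᵥ v) := (psd_map hPsd).dotProduct_mulVec_nonneg v
    have ht0 : 0 ≤ star v ⬝ᵥ v := dotProduct_star_self_nonneg v
    have htne : star v ⬝ᵥ v ≠ 0 := fun hc => hv0 (dotProduct_star_self_eq_zero.mp hc)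
    obtain ⟨hsre, hsim⟩ := Complex.le_def.mp hs0
    obtain ⟨htre, htim⟩ := Complex.le_def.mp ht0
    obtain ⟨hqre, _⟩ := Complex.le_def.mp hq
    simp only [Complex.zero_re, Complex.zero_im] at hsre hsim htre htim hqre
    have htre' : (star v ⬝ᵥ v).re ≠ 0 := fun h0 =>
      htne (Complex.ext (by simpa using h0) (by simpa using htim.symm))
    have htpos : 0 < (star v ⬝ᵥ v).re := lt_of_le_of_ne htre (Ne.symm htre')
    have hqre' : 0 ≤ (star v ⬝ᵥ (Pc *ᵥ v)).re
        - Complex.normSq z * (star v ⬝ᵥ (Pc *ᵥ v)).re - ϑ * (star v ⬝ᵥ v).re := by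
      simpa [Complex.sub_re, Complex.mul_re, smul_eq_mul, ← hsim, ← htim] using hqre
    have hq1 : Complex.normSq z < 1 := by
      by_contra hge
      push_neg at hge
      nlinarith [mul_nonneg hsre (sub_nonneg.mpr hge), mul_pos hϑ htpos]
    have habs := Complex.sq_norm z
    nlinarith [norm_nonneg z, habs, hq1]
  · -- Summable
    refine summable_of_sum_range_le (c := η - ϑ) (fun k => psd_trace_nonneg (psd_mul_transpose_self _)) ?_
    exact fun N => h2_norm_partial_bound n w p A B C η ϑ hϑ P Z hP hK hZC hPsd hQ h3 N
  · -- tsum bound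
    have hle := Real.tsum_le_of_sum_range_le
      (f := fun k : ℕ => ((C * A ^ k * B) * (C * A ^ k * B)ᵀ).trace)
      (fun k => psd_trace_nonneg (psd_mul_transpose_self _))
      (fun N => h2_norm_partial_bound n w p A B C η ϑ hϑ P Z hP hK hZC hPsd hQ h3 N)
    linarith
end

section
/- Let A₁ ∈ ℝ^{n×n}, A₂ ∈ ℝ^{d×d}, W ∈ ℝ^{n×w}, B_r ∈ ℝ^{d×p}, C ∈ ℝ^{p×n}, D ∈ ℝ^{p×w}, let α ∈ ℝ, γ > 0, ϑ > 0, let P ∈ ℝ^{(n+d)×(n+d)} be symmetric, and let G₁ ∈ ℝ^{(n+d)×(n+d)} and G₂ ∈ ℝ^{w×w} be invertible. Define G = blockdiag(G₁, G₂), Â = [ blockdiag(A₁, A₂) , [Wᵀ 0]ᵀ ] ∈ ℝ^{(n+d)×(n+d+w)}, D̂ = [ [C 0] , D ] ∈ ℝ^{p×(n+d+w)}, B̂ = [0ᵀ, −B_rᵀ]ᵀ ∈ ℝ^{(n+d)×p}, and Ξ = αG + αGᵀ − α² blockdiag(P, I_w). If the 4×4 block matrix [[P, ÂG, B̂, 0],[GᵀÂᵀ,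 Ξ, 0, GᵀD̂ᵀ],[B̂ᵀ, 0, (1/γ)I_p, 0],[0, D̂G, 0, γI_p]] − ϑI is positive semidefinite, then the block matrix [[P, 𝒜P, 𝒟],[P𝒜ᵀ, P, 0],[𝒟ᵀ, 0, I_w]] is positive definite, where 𝒜 = [[A₁, 0],[B_r C, A₂]] ∈ ℝ^{(n+d)×(n+d)} and 𝒟 = [Wᵀ, (B_r D)ᵀ]ᵀ ∈ ℝ^{(n+d)×w}. -/
open Matrix


lemma dp_self_pos {m : Type*} [Fintype m] {v : m → ℝ} (h : v ≠ 0) : 0 < v ⬝ᵥ v := by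
  simpa using Matrix.dotProduct_star_self_pos_iff.mpr h

lemma dp_self_nonneg {m : Type*} [Fintype m] (v : m → ℝ) : 0 ≤ v ⬝ᵥ v :=
  Finset.sum_nonneg fun _ _ => mul_self_nonneg _

lemma sum_elim_add_elim {m k : Type*} (a c : m → ℝ) (b d : k → ℝ) :
    Sum.elim a b + Sum.elim c d = Sum.elim (a + c) (b + d) := by
  funext i; rcases i with i | i <;> rfl

lemma sum_elim_zero_zero {m k : Type*} :
    (Sum.elim (0 : m → ℝ) (0 : k → ℝ)) = 0 := by
  funext i; rcases i with i | i <;> rfl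

lemma dp_transpose_mulVec {m k : Type*} [Fintype m] [Fintype k]
    (R : Matrix m k ℝ) (x : k → ℝ) (y : m → ℝ) :
    x ⬝ᵥ (Rᵀ *ᵥ y) = (R *ᵥ x) ⬝ᵥ y := by
  rw [dotProduct_mulVec, vecMul_transpose]

lemma posdef_blockdiag {m w : ℕ} {P : Matrix (Fin m ⊕ Fin w) (Fin m ⊕ Fin w) ℝ}
    {k : ℕ} (hP : P.IsSymm) (hPPD : P.PosDef) :
    (Matrix.fromBlocks P 0 0 (1 : Matrix (Fin k) (Fin k) ℝ)).PosDef := by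
  rw [posDef_iff_dotProduct_mulVec]
  constructor
  · rw [IsHermitian, conjTranspose_eq_transpose_of_trivial]
    simp [fromBlocks_transpose, hP.eq]
  · intro y hy
    obtain ⟨y₁, y₂, rfl⟩ : ∃ a b, y = Sum.elim a b := ⟨_, _, (Sum.elim_comp_inl_inr y).symm⟩
    simp only [star_trivial, fromBlocks_mulVec, mulVec_zero, zero_mulVec, add_zero, zero_add,
      one_mulVec, sumElim_dotProduct_sumElim, Sum.elim_comp_inl, Sum.elim_comp_inr]
    by_cases hy₁ : y₁ = 0
    · subst hy₁
      have hy₂ : y₂ ≠ 0 := by intro h; exact hy (by simp [h])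
      simp only [zero_dotProduct, zero_add]
      exact dp_self_pos hy₂
    · exact add_pos_of_pos_of_nonneg (by simpa using hPPD.dotProduct_mulVec_pos hy₁) (dp_self_nonneg _)

/-- Safe convex approximation: feasibility of the 4×4 block LMI implies positive
definiteness of the nonlinear block matrix inequality appearing in the filter design. -/
theorem lmi_safe_approximation
    (n d w p : ℕ)
    (A₁ : Matrix (Fin n) (Fin n) ℝ) (A₂ : Matrix (Fin d) (Fin d) ℝ)
    (W : Matrix (Fin n) (Fin w) ℝ) (Br : Matrix (Fin d) (Fin p) ℝ)
    (C : Matrix (Fin p) (Fin n) ℝ) (D : Matrix (Fin p) (Fin w) ℝ)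
    (α : ℝ) (γ ϑ : ℝ) (hγ : 0 < γ) (hϑ : 0 < ϑ)
    (P : Matrix (Fin n ⊕ Fin d) (Fin n ⊕ Fin d) ℝ) (hP : P.IsSymm)
    (G₁ : Matrix (Fin n ⊕ Fin d) (Fin n ⊕ Fin d) ℝ)
    (G₂ : Matrix (Fin w) (Fin w) ℝ)
    (hG₁ : IsUnit G₁.det) (hG₂ : IsUnit G₂.det)
    -- G = blockdiag(G₁, G₂)
    (G : Matrix ((Fin n ⊕ Fin d) ⊕ Fin w) ((Fin n ⊕ Fin d) ⊕ Fin w) ℝ)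
    (hG : G = Matrix.fromBlocks G₁ 0 0 G₂)
    -- Â = [ blockdiag(A₁, A₂) , [Wᵀ 0]ᵀ ]
    (Ahat : Matrix (Fin n ⊕ Fin d) ((Fin n ⊕ Fin d) ⊕ Fin w) ℝ)
    (hAhat : Ahat = Matrix.fromCols (Matrix.fromBlocks A₁ 0 0 A₂)
      (Matrix.fromRows W (0 : Matrix (Fin d) (Fin w) ℝ)))
    -- D̂ = [ [C 0] , D ]
    (Dhat : Matrix (Fin p) ((Fin n ⊕ Fin d) ⊕ Fin w) ℝ)
    (hDhat : Dhat = Matrix.fromCols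
      (Matrix.fromCols C (0 : Matrix (Fin p) (Fin d) ℝ)) D)
    -- B̂ = [0ᵀ, −Brᵀ]ᵀ
    (Bhat : Matrix (Fin n ⊕ Fin d) (Fin p) ℝ)
    (hBhat : Bhat = Matrix.fromRows (0 : Matrix (Fin n) (Fin p) ℝ) (-Br))
    -- Ξ = αG + αGᵀ − α² blockdiag(P, I_w)
    (Ξ : Matrix ((Fin n ⊕ Fin d) ⊕ Fin w) ((Fin n ⊕ Fin d) ⊕ Fin w) ℝ)
    (hΞ : Ξ = α • G + α • Gᵀ - α ^ 2 • Matrix.fromBlocks P 0 0 (1 : Matrix (Fin w) (Fin w) ℝ))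
    -- LMI hypothesis
    (hLMI : (Matrix.fromBlocks
        (Matrix.fromBlocks P (Ahat * G) (Gᵀ * Ahatᵀ) Ξ)
        (Matrix.fromBlocks Bhat 0 0 (Gᵀ * Dhatᵀ))
        (Matrix.fromBlocks Bhatᵀ 0 0 (Dhat * G))
        (Matrix.fromBlocks ((1 / γ) • (1 : Matrix (Fin p) (Fin p) ℝ)) 0 0
          (γ • (1 : Matrix (Fin p) (Fin p) ℝ)))
      - ϑ • 1).PosSemidef) :
    (Matrix.fromBlocks
      (Matrix.fromBlocks P
        (Matrix.fromBlocks A₁ 0 (Br * C) A₂ * P)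
        (P * (Matrix.fromBlocks A₁ 0 (Br * C) A₂)ᵀ) P)
      (Matrix.fromRows (Matrix.fromRows W (Br * D))
        (0 : Matrix (Fin n ⊕ Fin d) (Fin w) ℝ))
      (Matrix.fromCols (Matrix.fromRows W (Br * D))ᵀ
        (0 : Matrix (Fin w) (Fin n ⊕ Fin d) ℝ))
      (1 : Matrix (Fin w) (Fin w) ℝ)).PosDef := by
  -- abbreviations
  set Phat : Matrix ((Fin n ⊕ Fin d) ⊕ Fin w) ((Fin n ⊕ Fin d) ⊕ Fin w) ℝ :=
    Matrix.fromBlocks P 0 0 (1 : Matrix (Fin w) (Fin w) ℝ) with hPhatdef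
  set A0 : Matrix (Fin n ⊕ Fin d) (Fin n ⊕ Fin d) ℝ := Matrix.fromBlocks A₁ 0 0 A₂ with hA0
  set W0 : Matrix (Fin n ⊕ Fin d) (Fin w) ℝ :=
    Matrix.fromRows W (0 : Matrix (Fin d) (Fin w) ℝ) with hW0
  set C0 : Matrix (Fin p) (Fin n ⊕ Fin d) ℝ :=
    Matrix.fromCols C (0 : Matrix (Fin p) (Fin d) ℝ) with hC0
  set Acal : Matrix (Fin n ⊕ Fin d) (Fin n ⊕ Fin d) ℝ :=
    Matrix.fromBlocks A₁ 0 (Br * C) A₂ with hAcal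
  set Dcal : Matrix (Fin n ⊕ Fin d) (Fin w) ℝ := Matrix.fromRows W (Br * D) with hDcal
  -- P is positive definite
  have hPPD : P.PosDef := by
    refine posDef_iff_dotProduct_mulVec.mpr ⟨by rw [IsHermitian, conjTranspose_eq_transpose_of_trivial]; exact hP,
      fun x0 hx0 => ?_⟩
    have h := hLMI.dotProduct_mulVec_nonneg (Sum.elim (Sum.elim x0 0) (Sum.elim 0 0))
    simp only [star_trivial, sub_mulVec, dotProduct_sub, smul_mulVec, one_mulVec,
      dotProduct_smul, smul_eq_mul, fromBlocks_mulVec, Sum.elim_comp_inl, Sum.elim_comp_inr,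
      sum_elim_add_elim, sumElim_dotProduct_sumElim, mulVec_zero, zero_mulVec, add_zero,
      zero_add, dotProduct_zero, zero_dotProduct] at h
    have h2 := mul_pos hϑ (dp_self_pos hx0)
    simp only [star_trivial]
    linarith
  have hPhatPD : Phat.PosDef := posdef_blockdiag hP hPPD
  have hPhatT : Phatᵀ = Phat := by
    simp [hPhatdef, fromBlocks_transpose, hP.eq]
  have hPhatdet : IsUnit Phat.det := hPhatPD.det_pos.ne'.isUnit
  have hPinv1 : Phat⁻¹ * Phat = 1 := nonsing_inv_mul _ hPhatdet
  have hPinv2 : Phat * Phat⁻¹ = 1 := mul_nonsing_inv _ hPhatdet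
  have hPinvPD : Phat⁻¹.PosDef := hPhatPD.inv
  have hGdet : IsUnit G.det := by
    rw [hG, det_fromBlocks_zero₂₁]; exact hG₁.mul hG₂
  -- the Ξ identity
  have hXi : Ξ = Gᵀ * Phat⁻¹ * G - (G - α • Phat)ᵀ * Phat⁻¹ * (G - α • Phat) := by
    rw [hΞ, transpose_sub, transpose_smul, hPhatT]
    rw [Matrix.sub_mul, Matrix.sub_mul, Matrix.mul_sub, Matrix.mul_sub]
    simp only [Matrix.smul_mul, Matrix.mul_smul, Matrix.mul_assoc, hPinv1, hPinv2,
      Matrix.mul_one, Matrix.one_mul, smul_smul]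
    rw [show α * α = α ^ 2 by ring]
    abel
  -- Hermitian-ness of the goal matrix
  refine posDef_iff_dotProduct_mulVec.mpr ⟨?_, ?_⟩
  · rw [IsHermitian, conjTranspose_eq_transpose_of_trivial]
    simp [fromBlocks_transpose, transpose_fromRows, transpose_fromCols, transpose_mul,
      hP.eq, hAcal]
  intro x hx
  obtain ⟨x₁, x₂, x₃, rfl⟩ : ∃ a b c, x = Sum.elim (Sum.elim a b) c :=
    ⟨_, _, _, by funext i; rcases i with (i | i) | i <;> rfl⟩
  -- auxiliary vectors
  set y₂ : (Fin n ⊕ Fin d) ⊕ Fin w → ℝ := Sum.elim x₂ x₃ with hy₂def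
  set q : (Fin n ⊕ Fin d) ⊕ Fin w → ℝ := Phat *ᵥ y₂ with hqdef
  have hq : q = Sum.elim (P *ᵥ x₂) x₃ := by
    simp [hqdef, hPhatdef, hy₂def, fromBlocks_mulVec]
  set z₂ : (Fin n ⊕ Fin d) ⊕ Fin w → ℝ := G⁻¹ *ᵥ q with hz₂def
  have hGz₂ : G *ᵥ z₂ = q := by
    rw [hz₂def, mulVec_mulVec, mul_nonsing_inv _ hGdet, one_mulVec]
  set u : Fin p → ℝ := Bhatᵀ *ᵥ x₁ with hudef
  set v : Fin p → ℝ := Dhat *ᵥ q with hvdef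
  set s : Fin p → ℝ := (-γ) • u with hsdef
  set t : Fin p → ℝ := (-(1/γ)) • v with htdef
  set z : ((Fin n ⊕ Fin d) ⊕ ((Fin n ⊕ Fin d) ⊕ Fin w)) ⊕ (Fin p ⊕ Fin p) → ℝ :=
    Sum.elim (Sum.elim x₁ z₂) (Sum.elim s t) with hzdef
  -- from the LMI
  have key : ϑ * (z ⬝ᵥ z) ≤ z ⬝ᵥ ((Matrix.fromBlocks
        (Matrix.fromBlocks P (Ahat * G) (Gᵀ * Ahatᵀ) Ξ)
        (Matrix.fromBlocks Bhat 0 0 (Gᵀ * Dhatᵀ))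
        (Matrix.fromBlocks Bhatᵀ 0 0 (Dhat * G))
        (Matrix.fromBlocks ((1 / γ) • (1 : Matrix (Fin p) (Fin p) ℝ)) 0 0
          (γ • (1 : Matrix (Fin p) (Fin p) ℝ)))) *ᵥ z) := by
    have h := hLMI.dotProduct_mulVec_nonneg z
    simp only [star_trivial, sub_mulVec, dotProduct_sub, smul_mulVec, one_mulVec,
      dotProduct_smul, smul_eq_mul] at h
    linarith
  -- expansion of the quadratic form
  have hAGz : (Ahat * G) *ᵥ z₂ = Ahat *ᵥ q := by rw [← mulVec_mulVec, hGz₂]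
  have hDGz : (Dhat * G) *ᵥ z₂ = v := by rw [hvdef, ← mulVec_mulVec, hGz₂]
  have e4 : z₂ ⬝ᵥ ((Gᵀ * Ahatᵀ) *ᵥ x₁) = x₁ ⬝ᵥ (Ahat *ᵥ q) := by
    rw [← transpose_mul, dp_transpose_mulVec, hAGz, dotProduct_comm]
  have e6 : z₂ ⬝ᵥ ((Gᵀ * Dhatᵀ) *ᵥ t) = -(1/γ) * (v ⬝ᵥ v) := by
    rw [← transpose_mul, dp_transpose_mulVec, hDGz, htdef, dotProduct_smul, smul_eq_mul]
  have e3 : x₁ ⬝ᵥ (Bhat *ᵥ s) = -γ * (u ⬝ᵥ u) := by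
    rw [hsdef, mulVec_smul, dotProduct_smul, smul_eq_mul, show Bhat = (Bhatᵀ)ᵀ by
      rw [transpose_transpose], dp_transpose_mulVec, ← hudef]
  have e7 : s ⬝ᵥ (Bhatᵀ *ᵥ x₁) = -γ * (u ⬝ᵥ u) := by
    rw [← hudef, hsdef, smul_dotProduct, smul_eq_mul]
  have e8 : t ⬝ᵥ ((Dhat * G) *ᵥ z₂) = -(1/γ) * (v ⬝ᵥ v) := by
    rw [hDGz, htdef, smul_dotProduct, smul_eq_mul]
  have hexp : z ⬝ᵥ ((Matrix.fromBlocks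
        (Matrix.fromBlocks P (Ahat * G) (Gᵀ * Ahatᵀ) Ξ)
        (Matrix.fromBlocks Bhat 0 0 (Gᵀ * Dhatᵀ))
        (Matrix.fromBlocks Bhatᵀ 0 0 (Dhat * G))
        (Matrix.fromBlocks ((1 / γ) • (1 : Matrix (Fin p) (Fin p) ℝ)) 0 0
          (γ • (1 : Matrix (Fin p) (Fin p) ℝ)))) *ᵥ z) =
      x₁ ⬝ᵥ (P *ᵥ x₁) + 2 * (x₁ ⬝ᵥ (Ahat *ᵥ q)) + z₂ ⬝ᵥ (Ξ *ᵥ z₂)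
        - γ * (u ⬝ᵥ u) - (1/γ) * (v ⬝ᵥ v) := by
    simp only [hzdef, fromBlocks_mulVec, Sum.elim_comp_inl, Sum.elim_comp_inr,
      sum_elim_add_elim, sumElim_dotProduct_sumElim, dotProduct_add, mulVec_zero, zero_mulVec,
      add_zero, zero_add, smul_mulVec, one_mulVec, dotProduct_smul, smul_eq_mul]
    rw [hAGz, e4, e6, e3, e7, e8]
    have hss : s ⬝ᵥ s = γ^2 * (u ⬝ᵥ u) := by
      rw [hsdef, smul_dotProduct, dotProduct_smul]; simp [smul_eq_mul]; ring
    have htt : t ⬝ᵥ t = (1/γ)^2 * (v ⬝ᵥ v) := by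
      rw [htdef, smul_dotProduct, dotProduct_smul]; simp [smul_eq_mul]; ring
    rw [hss, htt]
    field_simp
    ring
  -- bridge identities
  have hBC : Bhat * C0 = Matrix.fromBlocks 0 0 (-(Br * C)) 0 := by
    rw [hBhat, hC0]
    ext (i | i) (j | j) <;>
      simp [mul_apply, fromRows_apply_inl, fromRows_apply_inr, fromCols_apply_inl, fromCols_apply_inr,
        fromBlocks, neg_mul, Finset.sum_neg_distrib]
  have hAcal' : Acal = A0 - Bhat * C0 := by
    rw [hBC, hAcal, hA0]
    ext (i | i) (j | j) <;> simp [fromBlocks]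
  have hBD : Bhat * D = Matrix.fromRows 0 (-(Br * D)) := by
    rw [hBhat]; simp [fromRows_mul, Matrix.neg_mul]
  have hDcal' : Dcal = W0 - Bhat * D := by
    rw [hBD, hDcal, hW0]
    ext (i | i) j <;> simp [fromRows_apply_inl, fromRows_apply_inr]
  have hAhatq : Ahat *ᵥ q = A0 *ᵥ (P *ᵥ x₂) + W0 *ᵥ x₃ := by
    rw [hq, hAhat]; exact fromCols_mulVec_sumElim _ _ _ _
  have hv2 : v = C0 *ᵥ (P *ᵥ x₂) + D *ᵥ x₃ := by
    rw [hvdef, hq, hDhat]; exact fromCols_mulVec_sumElim _ _ _ _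
  have huv : u ⬝ᵥ v = x₁ ⬝ᵥ (Bhat *ᵥ v) := by
    rw [hudef, mulVec_transpose, ← dotProduct_mulVec]
  have hbridge : x₁ ⬝ᵥ (Ahat *ᵥ q) =
      x₁ ⬝ᵥ (Acal *ᵥ (P *ᵥ x₂)) + x₁ ⬝ᵥ (Dcal *ᵥ x₃) + u ⬝ᵥ v := by
    rw [hAhatq, huv, hv2, hAcal', hDcal']
    simp only [Matrix.sub_mulVec, mulVec_add, dotProduct_add, dotProduct_sub, ← mulVec_mulVec]
    ring
  -- the Ξ bound
  have hPinvq : Phat⁻¹ *ᵥ q = y₂ := by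
    rw [hqdef, mulVec_mulVec, hPinv1, one_mulVec]
  have hGPGz : z₂ ⬝ᵥ ((Gᵀ * Phat⁻¹ * G) *ᵥ z₂) = x₂ ⬝ᵥ (P *ᵥ x₂) + x₃ ⬝ᵥ x₃ := by
    rw [Matrix.mul_assoc, ← mulVec_mulVec, dp_transpose_mulVec, hGz₂, ← mulVec_mulVec, hGz₂,
      hPinvq]
    rw [hq, hy₂def, sumElim_dotProduct_sumElim, dotProduct_comm]
  have hPSD : 0 ≤ z₂ ⬝ᵥ (((G - α • Phat)ᵀ * Phat⁻¹ * (G - α • Phat)) *ᵥ z₂) := by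
    rw [Matrix.mul_assoc, ← mulVec_mulVec, dp_transpose_mulVec, ← mulVec_mulVec]
    simpa using hPinvPD.posSemidef.dotProduct_mulVec_nonneg ((G - α • Phat) *ᵥ z₂)
  have hXiLe : z₂ ⬝ᵥ (Ξ *ᵥ z₂) ≤ x₂ ⬝ᵥ (P *ᵥ x₂) + x₃ ⬝ᵥ x₃ := by
    rw [hXi, Matrix.sub_mulVec, dotProduct_sub, hGPGz]
    linarith [hPSD]
  -- AM-GM
  have hexp2 : (γ • u - v) ⬝ᵥ (γ • u - v) =
      γ ^ 2 * (u ⬝ᵥ u) - 2 * γ * (u ⬝ᵥ v) + v ⬝ᵥ v := by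
    simp only [sub_dotProduct, dotProduct_sub, smul_dotProduct, dotProduct_smul, smul_eq_mul,
      dotProduct_comm v u]
    ring
  have hγc : (1 / γ) * γ = 1 := by field_simp
  have hAM : 2 * (u ⬝ᵥ v) ≤ γ * (u ⬝ᵥ u) + (1 / γ) * (v ⬝ᵥ v) := by
    have h0 : 0 ≤ (1 / γ) * ((γ • u - v) ⬝ᵥ (γ • u - v)) :=
      mul_nonneg (by positivity) (dp_self_nonneg _)
    rw [hexp2] at h0
    have h1 : (1 / γ) * (γ ^ 2 * (u ⬝ᵥ u) - 2 * γ * (u ⬝ᵥ v) + v ⬝ᵥ v) =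
        ((1 / γ) * γ) * (γ * (u ⬝ᵥ u)) - 2 * ((1 / γ) * γ) * (u ⬝ᵥ v)
          + (1 / γ) * (v ⬝ᵥ v) := by ring
    rw [h1, hγc] at h0
    linarith
  -- z is nonzero
  have hzne : z ≠ 0 := by
    intro h0
    rw [hzdef] at h0
    have hx₁0 : x₁ = 0 := by funext i; exact congrFun h0 (Sum.inl (Sum.inl i))
    have hz₂0 : z₂ = 0 := by funext i; exact congrFun h0 (Sum.inl (Sum.inr i))
    have hq0 : q = 0 := by rw [← hGz₂, hz₂0, mulVec_zero]
    have hy₂0 : y₂ = 0 := by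
      by_contra hy
      have h1 := hPhatPD.dotProduct_mulVec_pos (by simpa using hy)
      rw [star_trivial, ← hqdef, hq0] at h1
      simp at h1
    have hx₂0 : x₂ = 0 := by funext i; exact congrFun hy₂0 (Sum.inl i)
    have hx₃0 : x₃ = 0 := by funext i; exact congrFun hy₂0 (Sum.inr i)
    apply hx
    funext i; rcases i with (i | i) | i <;> simp [hx₁0, hx₂0, hx₃0]
  have hzz : 0 < ϑ * (z ⬝ᵥ z) := mul_pos hϑ (dp_self_pos hzne)
  -- target quadratic form
  have t21 : x₂ ⬝ᵥ ((P * Acalᵀ) *ᵥ x₁) = x₁ ⬝ᵥ (Acal *ᵥ (P *ᵥ x₂)) := by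
    rw [← mulVec_mulVec, dotProduct_mulVec x₂ P, ← mulVec_transpose, hP.eq,
      dp_transpose_mulVec, dotProduct_comm]
  have t31 : x₃ ⬝ᵥ (Dcalᵀ *ᵥ x₁) = x₁ ⬝ᵥ (Dcal *ᵥ x₃) := by
    rw [dp_transpose_mulVec, dotProduct_comm]
  have htarget : (Sum.elim (Sum.elim x₁ x₂) x₃) ⬝ᵥ ((Matrix.fromBlocks
      (Matrix.fromBlocks P (Acal * P) (P * Acalᵀ) P)
      (Matrix.fromRows Dcal (0 : Matrix (Fin n ⊕ Fin d) (Fin w) ℝ))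
      (Matrix.fromCols Dcalᵀ (0 : Matrix (Fin w) (Fin n ⊕ Fin d) ℝ))
      (1 : Matrix (Fin w) (Fin w) ℝ)) *ᵥ (Sum.elim (Sum.elim x₁ x₂) x₃)) =
      x₁ ⬝ᵥ (P *ᵥ x₁) + 2 * (x₁ ⬝ᵥ (Acal *ᵥ (P *ᵥ x₂))) + 2 * (x₁ ⬝ᵥ (Dcal *ᵥ x₃))
        + x₂ ⬝ᵥ (P *ᵥ x₂) + x₃ ⬝ᵥ x₃ := by
    simp only [fromBlocks_mulVec, fromRows_mulVec, fromCols_mulVec_sumElim,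
      Sum.elim_comp_inl, Sum.elim_comp_inr, sum_elim_add_elim, sumElim_dotProduct_sumElim,
      dotProduct_add, mulVec_zero, zero_mulVec, add_zero, zero_add, one_mulVec]
    rw [t21, t31, ← mulVec_mulVec]
    ring
  simp only [star_trivial]
  rw [htarget]
  linarith [key, hexp, hbridge, hXiLe, hAM, hzz]
end
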